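/- Let G consist of disjoint chains of nodes each labeled P (cost +1) or V (cost −1). A prefix subschedule S of a schedule of G is valid iff at every prefix the number of P-operations does not exceed the number of V-operations, i.e., iff height(S) = 0 where costs are +1 for P and −1 for V. Consequently, for nodes v, w, there exists a valid subschedule in which v precedes w if and only if the minimum over cuts Γ (with Γ containing v and w and with w the last node of its chain portion) of the height of the optimal w-terminal schedule of the prefix subgraph G[Γ] equals 0. -/

import Mathlib

def cost (L : List ℤ) : ℤ := L.sum

def height (L : List ℤ) : ℤ :=
  ((List.range (L.length + 1)).map fun k => (L.take k).sum).foldr max 0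

def fall (L : List ℤ) : ℤ := height L - cost L

variable {p : ℕ}

/-- Realize a word of chain indices as the sequence of node costs obtained by,
at each step, consuming the next unused node of the indicated chain. -/
def realize (C : Fin p → List ℤ) : List (Fin p) → List ℤ
  | [] => []
  | i :: w => (C i).headD 0 :: realize (Function.update C i (C i).tail) w

/-- A schedule of the chain graph `C`: a word using each chain exactly up to
its length (a linear extension, realized chainwise). -/
def IsSched (C : Fin p → List ℤ) (w : List (Fin p)) : Prop :=
  ∀ i, w.count i = (C i).length

/-- A subschedule: a prefix of some schedule. -/
def IsSub (C : Fin p → List ℤ) (w : List (Fin p)) : Prop :=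
  ∀ i, w.count i ≤ (C i).length

/-- positions in `u` at which chain `i` is scheduled. -/
def occIdx (u : List (Fin p)) (i : Fin p) : List ℕ :=
  (List.range u.length).filter fun t => decide (u[t]? = some i)

/-- In the word `u`, node number `a` (0-based) of chain `i` occurs before node
number `b` of chain `j`. -/
def Precedes (u : List (Fin p)) (i : Fin p) (a : ℕ) (j : Fin p) (b : ℕ) : Prop :=
  ∃ s t, (occIdx u i)[a]? = some s ∧ (occIdx u j)[b]? = some t ∧ s < t

/-- A subschedule is valid when, at every prefix, the number of `P` operations
(+1) does not exceed the number of `V` operations (−1). -/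
def ValidWord (C : Fin p → List ℤ) (u : List (Fin p)) : Prop :=
  ∀ t, ((realize C u).take t).sum ≤ 0

/- ------------------ auxiliary lemmas ------------------ -/

lemma aux_foldr_max_nonneg (l : List ℤ) : 0 ≤ l.foldr max 0 := by
  induction l with
  | nil => simp
  | cons x l ih => simpa using Or.inr ih

lemma aux_foldr_max_le_zero (l : List ℤ) : l.foldr max 0 ≤ 0 ↔ ∀ x ∈ l, x ≤ 0 := by
  induction l with
  | nil => simp
  | cons x l ih => simp [ih]

lemma aux_height_nonneg (L : List ℤ) : 0 ≤ height L := aux_foldr_max_nonneg _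

lemma aux_height_eq_zero (L : List ℤ) : height L = 0 ↔ ∀ t, (L.take t).sum ≤ 0 := by
  constructor
  · intro h t
    have h' := (aux_foldr_max_le_zero _).mp h.le
    rcases le_or_gt t L.length with ht | ht
    · exact h' _ (List.mem_map.mpr ⟨t, List.mem_range.mpr (by omega), rfl⟩)
    · rw [List.take_of_length_le ht.le, ← List.take_length (l := L)]
      exact h' _ (List.mem_map.mpr ⟨L.length, List.mem_range.mpr (by omega), rfl⟩)
  · intro h
    refine le_antisymm ((aux_foldr_max_le_zero _).mpr ?_) (aux_foldr_max_nonneg _)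
    rintro x hx
    rcases List.mem_map.mp hx with ⟨k, _, rfl⟩
    exact h k

lemma aux_head?_take_succ (l : List ℤ) (n : ℕ) : (l.take (n+1)).head? = l.head? := by
  cases l <;> simp

lemma aux_tail_take_succ (l : List ℤ) (n : ℕ) : (l.take (n+1)).tail = l.tail.take n := by
  cases l <;> simp

lemma aux_realize_congr (C D : Fin p → List ℤ) (w : List (Fin p))
    (h : ∀ k, (C k).take (w.count k) = (D k).take (w.count k)) :
    realize C w = realize D w := by
  induction w generalizing C D with
  | nil => rfl
  | cons x w ih =>
    have hx := h x
    rw [List.count_cons_self] at hx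
    have hhead : (C x).headD 0 = (D x).headD 0 := by
      have h2 := congrArg (fun l => l.head?) hx
      simp only [aux_head?_take_succ] at h2
      simp [List.headD_eq_head?, h2]
    simp only [realize]
    rw [hhead, ih]
    intro k
    by_cases hk : k = x
    · subst hk
      simp only [Function.update_self]
      have := congrArg List.tail hx
      rwa [aux_tail_take_succ, aux_tail_take_succ] at this
    · simp only [Function.update_of_ne hk]
      have := h k
      rwa [List.count_cons_of_ne (Ne.symm hk)] at this

lemma aux_realize_take (C : Fin p → List ℤ) (w : List (Fin p)) (t : ℕ) :
    realize C (w.take t) = (realize C w).take t := by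
  induction w generalizing C t with
  | nil => simp [realize]
  | cons x w ih =>
    cases t with
    | zero => simp [realize]
    | succ t => simp [realize, ih]

lemma aux_occIdx_cons (x : Fin p) (u : List (Fin p)) (i : Fin p) :
    occIdx (x :: u) i = (if x = i then [0] else []) ++ (occIdx u i).map (· + 1) := by
  unfold occIdx
  rw [List.length_cons, List.range_succ_eq_map, List.filter_cons]
  simp only [List.getElem?_cons_zero, List.filter_map]
  have h1 : List.filter ((fun t => decide ((x :: u)[t]? = some i)) ∘ Nat.succ)
      (List.range u.length) = (List.range u.length).filter (fun t => decide (u[t]? = some i)) := by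
    apply List.filter_congr; intro t _; simp [Function.comp]
  rw [h1]
  have h2 : List.map Nat.succ ((List.range u.length).filter (fun t => decide (u[t]? = some i)))
      = List.map (fun x : ℕ => x + 1) ((List.range u.length).filter
        (fun t => decide (u[t]? = some i))) := rfl
  rw [h2]
  by_cases h : x = i <;> simp [h]

lemma aux_occIdx_cons_self (u : List (Fin p)) (i : Fin p) :
    occIdx (i :: u) i = 0 :: (occIdx u i).map (· + 1) := by
  rw [aux_occIdx_cons]; simp

lemma aux_occIdx_cons_ne {x i : Fin p} (hx : x ≠ i) (u : List (Fin p)) :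
    occIdx (x :: u) i = (occIdx u i).map (· + 1) := by
  rw [aux_occIdx_cons]; simp [hx]

lemma aux_occIdx_get (u : List (Fin p)) (i : Fin p) (a s : ℕ) :
    (occIdx u i)[a]? = some s ↔ u[s]? = some i ∧ (u.take s).count i = a := by
  induction u generalizing a s with
  | nil => simp [occIdx]
  | cons x u ih =>
    by_cases hx : x = i
    · subst hx
      rw [aux_occIdx_cons_self]
      cases a with
      | zero =>
        cases s with
        | zero => simp
        | succ s =>
          simp only [List.getElem?_cons_zero, List.getElem?_cons_succ,
            List.take_succ_cons, List.count_cons_self]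
          constructor
          · intro h; exact absurd (Option.some.inj h) (by omega)
          · rintro ⟨-, h2⟩; omega
      | succ a =>
        cases s with
        | zero =>
          simp only [List.getElem?_cons_succ, List.getElem?_map, List.getElem?_cons_zero,
            List.take_zero, List.count_nil, Option.map_eq_some_iff]
          constructor
          · rintro ⟨s', -, h2⟩; omega
          · rintro ⟨-, h2⟩; omega
        | succ s =>
          simp only [List.getElem?_cons_succ, List.getElem?_map, List.take_succ_cons,
            List.count_cons_self, Option.map_eq_some_iff]
          constructor
          · rintro ⟨s', h1, h2⟩
            have hs : s' = s := by omega
            subst hs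
            have h3 := (ih a s').mp h1
            exact ⟨h3.1, by omega⟩
          · rintro ⟨h1, h2⟩
            exact ⟨s, (ih a s).mpr ⟨h1, by omega⟩, rfl⟩
    · rw [aux_occIdx_cons_ne hx]
      cases s with
      | zero =>
        simp only [List.getElem?_map, List.getElem?_cons_zero, Option.map_eq_some_iff]
        constructor
        · rintro ⟨s', -, h2⟩; omega
        · rintro ⟨h1, -⟩; exact absurd (Option.some.inj h1) hx
      | succ s =>
        simp only [List.getElem?_map, List.getElem?_cons_succ, List.take_succ_cons,
          List.count_cons_of_ne hx, Option.map_eq_some_iff]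
        constructor
        · rintro ⟨s', h1, h2⟩
          have hs : s' = s := by omega
          subst hs
          exact (ih a s').mp h1
        · intro h; exact ⟨s, (ih a s).mpr h, rfl⟩

lemma aux_occIdx_length (u : List (Fin p)) (i : Fin p) :
    (occIdx u i).length = u.count i := by
  induction u with
  | nil => simp [occIdx]
  | cons x u ih =>
    by_cases hx : x = i
    · subst hx; rw [aux_occIdx_cons_self]; simp [ih]
    · rw [aux_occIdx_cons_ne hx]
      simp [ih, List.count_cons_of_ne hx]

/- ------------------ main theorem ------------------ -/

theorem valid_iff_height_zero_and_race_characterization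
    (C : Fin p → List ℤ) (hpm : ∀ k, ∀ x ∈ C k, x = 1 ∨ x = -1)
    (i j : Fin p) (hij : i ≠ j) (a b : ℕ)
    (ha : a < (C i).length) (hb : b < (C j).length) :
    (∀ u, IsSub C u → (ValidWord C u ↔ height (realize C u) = 0)) ∧
    ((∃ u, IsSub C u ∧ ValidWord C u ∧ Precedes u i a j b) ↔
      sInf {h : ℕ | ∃ Γ : Fin p → ℕ, (∀ k, Γ k ≤ (C k).length) ∧
        Γ j = b + 1 ∧ a + 1 ≤ Γ i ∧
        ∃ w, IsSched (fun k => (C k).take (Γ k)) w ∧ w.getLast? = some j ∧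
          (height (realize (fun k => (C k).take (Γ k)) w)).toNat = h} = 0) := by
  constructor
  · exact fun u _ => (aux_height_eq_zero _).symm
  set S : Set ℕ := {h : ℕ | ∃ Γ : Fin p → ℕ, (∀ k, Γ k ≤ (C k).length) ∧
        Γ j = b + 1 ∧ a + 1 ≤ Γ i ∧
        ∃ w, IsSched (fun k => (C k).take (Γ k)) w ∧ w.getLast? = some j ∧
          (height (realize (fun k => (C k).take (Γ k)) w)).toNat = h} with hS
  -- S is nonempty
  have hSne : S.Nonempty := by
    set Γ : Fin p → ℕ := fun k => if k = i then a + 1 else if k = j then b + 1 else 0 with hΓ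
    set w : List (Fin p) := (List.replicate (a+1) i ++ List.replicate b j) ++ [j] with hw
    have hΓi : Γ i = a + 1 := by simp [hΓ]
    have hΓj : Γ j = b + 1 := by simp [hΓ, Ne.symm hij]
    have hΓle : ∀ k, Γ k ≤ (C k).length := by
      intro k
      rcases eq_or_ne k i with rfl | hki
      · rw [hΓi]; omega
      · rcases eq_or_ne k j with rfl | hkj
        · rw [hΓj]; omega
        · simp [hΓ, hki, hkj]
    have hcnt : ∀ k, List.count k w = Γ k := by
      intro k
      rw [hw, List.count_append, List.count_append, List.count_replicate,
        List.count_replicate]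
      rcases eq_or_ne k i with rfl | hki
      · have hjk : j ≠ k := Ne.symm hij
        rw [hΓi]
        simp [hjk, List.count_cons]
      · rcases eq_or_ne k j with rfl | hkj
        · rw [hΓj]
          simp [Ne.symm hki, List.count_cons]
        · simp [hΓ, hki, hkj, Ne.symm hki, Ne.symm hkj, List.count_cons]
    refine ⟨_, ⟨Γ, hΓle, hΓj, by omega, w, ?_, ?_, rfl⟩⟩
    · intro k
      show List.count k w = (List.take (Γ k) (C k)).length
      rw [hcnt k, List.length_take]
      have := hΓle k
      omega
    · rw [hw]; exact List.getLast?_concat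
  constructor
  · rintro ⟨u, hsub, hval, s, t, hs, ht, hst⟩
    apply Nat.sInf_eq_zero.mpr
    left
    obtain ⟨hus, hcs⟩ := (aux_occIdx_get u i a s).mp hs
    obtain ⟨hut, hct⟩ := (aux_occIdx_get u j b t).mp ht
    set w : List (Fin p) := u.take (t+1) with hwdef
    have hwt : w = u.take t ++ [j] := by
      rw [hwdef, List.take_succ, hut]; rfl
    have hwcount : ∀ k, w.count k ≤ u.count k :=
      fun k => ((List.take_prefix _ _).sublist).count_le k
    have hΓle : ∀ k, w.count k ≤ (C k).length := fun k => le_trans (hwcount k) (hsub k)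
    refine ⟨fun k => w.count k, hΓle, ?_, ?_, w, ?_, ?_, ?_⟩
    · show List.count j w = b + 1
      rw [hwt, List.count_append, hct]
      simp
    · show a + 1 ≤ List.count i w
      have hpre : u.take (s+1) = w.take (s+1) := by
        rw [hwdef, List.take_take]
        congr 1
        omega
      have h1 : (u.take (s+1)).count i = a + 1 := by
        rw [List.take_succ, hus, List.count_append, hcs]
        simp
      calc a + 1 = (w.take (s+1)).count i := by rw [← hpre, h1]
        _ ≤ w.count i := ((List.take_prefix _ _).sublist).count_le i
    · intro k
      show List.count k w = (List.take (List.count k w) (C k)).length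
      rw [List.length_take]
      have := hΓle k
      omega
    · rw [hwt]; exact List.getLast?_concat
    · show (height (realize (fun k => (C k).take (List.count k w)) w)).toNat = 0
      have hre : realize (fun k => (C k).take (List.count k w)) w = realize C w := by
        apply aux_realize_congr
        intro k
        rw [List.take_take, min_self]
      rw [hre]
      have hv : ∀ t', ((realize C w).take t').sum ≤ 0 := by
        intro t'
        rw [hwdef, ← aux_realize_take, List.take_take, aux_realize_take]
        exact hval _
      rw [(aux_height_eq_zero _).mpr hv]
      rfl
  · intro h0
    rcases Nat.sInf_eq_zero.mp h0 with hmem | hempty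
    · obtain ⟨Γ, hΓle, hΓj, hΓi, w, hw, hlast, hh⟩ := hmem
      have hcnt : ∀ k, w.count k = Γ k := by
        intro k
        have := hw k
        rw [List.length_take] at this
        have h2 := hΓle k
        omega
      have hre : realize C w = realize (fun k => (C k).take (Γ k)) w := by
        apply aux_realize_congr
        intro k
        rw [List.take_take, hcnt k, min_self]
      have hh0 : height (realize C w) = 0 := by
        rw [hre]
        have h1 := aux_height_nonneg (realize (fun k => (C k).take (Γ k)) w)
        have h2 := Int.toNat_eq_zero.mp hh
        omega
      have hval : ValidWord C w := (aux_height_eq_zero _).mp hh0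
      have hne : w ≠ [] := by
        intro h; rw [h] at hlast; simp at hlast
      have hlen : 1 ≤ w.length := by
        cases w with
        | nil => exact absurd rfl hne
        | cons x l => simp
      have hjlast : w[w.length - 1]? = some j := by
        rw [← List.getLast?_eq_getElem?]; exact hlast
      -- occurrence of j
      have hwfull : w.take ((w.length - 1) + 1) = w := by
        apply List.take_of_length_le; omega
      have hsplit : w = w.take (w.length - 1) ++ [j] := by
        conv_lhs => rw [← hwfull]
        rw [List.take_succ, hjlast]
        rfl
      have hcjb : (w.take (w.length - 1)).count j = b := by
        have htot : w.count j = b + 1 := by rw [hcnt j, hΓj]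
        have h2 : (w.take (w.length - 1) ++ [j]).count j = b + 1 := by
          rw [← hsplit]; exact htot
        rw [List.count_append] at h2
        have h3 : List.count j [j] = 1 := by simp
        omega
      have hoj : (occIdx w j)[b]? = some (w.length - 1) :=
        (aux_occIdx_get w j b _).mpr ⟨hjlast, hcjb⟩
      -- occurrence of i
      have hilen : a < (occIdx w i).length := by
        rw [aux_occIdx_length, hcnt i]; omega
      set s := (occIdx w i)[a]'hilen with hsdef
      have hois : (occIdx w i)[a]? = some s := List.getElem?_eq_getElem hilen
      obtain ⟨hws, -⟩ := (aux_occIdx_get w i a s).mp hois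
      have hslt : s < w.length := (List.getElem?_eq_some_iff.mp hws).1
      have hsne : s ≠ w.length - 1 := by
        intro h
        rw [h] at hws
        exact hij (Option.some.inj (hws.symm.trans hjlast))
      exact ⟨w, fun k => by rw [hcnt k]; exact hΓle k, hval,
        s, w.length - 1, hois, hoj, by omega⟩
    · exact absurd hempty (Set.nonempty_iff_ne_empty.mp hSne)
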